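/- Valencies shrink across rounds: for every n ≥ 3 and all ℓ, m ≥ 1, let val and val′ denote the set agreement valency maps on χ^ℓ(σ) and on χ^{ℓ+m}(σ), respectively. Then for every simplex τ ∈ χ^ℓ(σ) and every simplex τ′ ∈ χ^m(τ), one has val′(τ′) ⊆ val(τ). -/
import Mathlib


open scoped Classical

/-- Vertices of the ℓ-th chromatic subdivision of the standard simplex on `Fin n`. -/
def ChromV (n : ℕ) : ℕ → Type
  | 0 => Fin n
  | ℓ + 1 => Fin n × Finset (ChromV n ℓ)

instance chromVDecEq (n : ℕ) : ∀ ℓ, DecidableEq (ChromV n ℓ)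
  | 0 => inferInstanceAs (DecidableEq (Fin n))
  | ℓ + 1 =>
    letI := chromVDecEq n ℓ
    inferInstanceAs (DecidableEq (Fin n × Finset (ChromV n ℓ)))

/-- The color of a vertex of the ℓ-th chromatic subdivision. -/
def chromCol (n : ℕ) : ∀ ℓ, ChromV n ℓ → Fin n
  | 0, v => v
  | _ + 1, v => v.1

/-- `ids γ`: the set of colors of the vertices of a simplex `γ`. -/
def ids {n ℓ : ℕ} (γ : Finset (ChromV n ℓ)) : Finset (Fin n) :=
  γ.image (chromCol n ℓ)

/-- One step of standard chromatic subdivision of a set of (nonempty) simplexes. -/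
def subdiv {α : Type} {n : ℕ} (col : α → Fin n) (K : Set (Finset α)) :
    Set (Finset (Fin n × Finset α)) :=
  { s | s.Nonempty ∧
    (∀ v ∈ s, v.2 ∈ K ∧ v.1 ∈ v.2.image col) ∧
    (∀ u ∈ s, ∀ v ∈ s, u ≠ v → u.1 ≠ v.1) ∧
    (∀ u ∈ s, ∀ v ∈ s, u.2 ⊆ v.2 ∨ v.2 ⊆ u.2) ∧
    (∀ u ∈ s, ∀ v ∈ s, u.1 ∈ v.2.image col → u.2 ⊆ v.2) }

/-- The faces of a simplex `τ`: its nonempty subsets. -/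
def facesOf {α : Type} (τ : Finset α) : Set (Finset α) :=
  { s | s.Nonempty ∧ s ⊆ τ }

/-- The ℓ-th chromatic subdivision `χ^ℓ(ρ)` of a face `ρ` of σ,
as a subcomplex of `χ^ℓ(σ)`. -/
def chromSub (n : ℕ) (ρ : Finset (Fin n)) : ∀ ℓ, Set (Finset (ChromV n ℓ))
  | 0 => facesOf ρ
  | ℓ + 1 => subdiv (chromCol n ℓ) (chromSub n ρ ℓ)

/-- Iterated chromatic subdivision of a subcomplex sitting at level ℓ. -/
def iterSub (n ℓ : ℕ) : ∀ m, Set (Finset (ChromV n ℓ)) → Set (Finset (ChromV n (ℓ + m)))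
  | 0, K => K
  | m + 1, K => subdiv (chromCol n (ℓ + m)) (iterSub n ℓ m K)

/-- `χ^m(τ)` for a simplex `τ ∈ χ^ℓ(σ)`: the subcomplex of `χ^{ℓ+m}(σ)` obtained by
iterated subdivision of `τ` and its faces. -/
def subOf {n ℓ : ℕ} (m : ℕ) (τ : Finset (ChromV n ℓ)) : Set (Finset (ChromV n (ℓ + m))) :=
  iterSub n ℓ m (facesOf τ)

/-- The vertices of a subcomplex. -/
def vertexSet {n ℓ : ℕ} (L : Set (Finset (ChromV n ℓ))) : Set (ChromV n ℓ) :=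
  { v | ∃ s ∈ L, v ∈ s }

/-- `c(L)`: the set of values taken by a coloring `c` on the vertices of a subcomplex `L`. -/
def colorSet {n ℓ : ℕ} {β : Type} (c : ChromV n ℓ → β) (L : Set (Finset (ChromV n ℓ))) :
    Set β :=
  c '' vertexSet L

/-- The carrier of a simplex `γ ∈ χ^ℓ(σ)`: the smallest face `ρ` of σ with `γ ∈ χ^ℓ(ρ)`,
realized as the intersection of all such faces. -/
noncomputable def carr {n ℓ : ℕ} (γ : Finset (ChromV n ℓ)) : Finset (Fin n) :=
  Finset.univ.filter fun i => ∀ ρ : Finset (Fin n), γ ∈ chromSub n ρ ℓ → i ∈ ρ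

/-- The set agreement valency map: `val(τ) = ids(τ)` if `|τ| ≤ n-2`, else `carr(τ)`. -/
noncomputable def saVal {n ℓ : ℕ} (τ : Finset (ChromV n ℓ)) : Finset (Fin n) :=
  if τ.card ≤ n - 2 then ids τ else carr τ

/-- The weak symmetry breaking valency map: `{1}` on simplexes of dimension ≤ n-3,
`{0,1}` otherwise. -/
def wsbVal {n ℓ : ℕ} (τ : Finset (ChromV n ℓ)) : Set (Fin 2) :=
  if τ.card ≤ n - 2 then {1} else Set.univ

/-- The simplicial map on the ℓ-th chromatic subdivision induced functorially by a
map `f` on the colors/vertices of σ. -/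
def vmap (n : ℕ) (f : Fin n → Fin n) : ∀ ℓ, ChromV n ℓ → ChromV n ℓ
  | 0, v => f v
  | ℓ + 1, v => (f v.1, v.2.image (vmap n f ℓ))

/-- The order-preserving bijection between two faces `s` and `t` of σ of the same
cardinality (extended by the identity elsewhere). -/
noncomputable def opBij {n : ℕ} (s t : Finset (Fin n)) (i : Fin n) : Fin n :=
  if h : i ∈ s ∧ s.card = t.card then
    ↑(t.orderIsoOfFin rfl (Fin.cast h.2 ((s.orderIsoOfFin rfl).symm ⟨i, h.1⟩)))
  else i

/-- A coloring of `χ^L(σ)` is symmetric if it is invariant under the order-preserving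
simplicial bijections between subdivided faces of σ of the same dimension. -/
def SymmColoring {n L : ℕ} {β : Type} (b : ChromV n L → β) : Prop :=
  ∀ s t : Finset (Fin n), s.Nonempty → t.Nonempty → s ≠ t → s.card = t.card →
    ∀ v ∈ vertexSet (chromSub n s L), b (vmap n (opBij s t) L v) = b v

/-- Transport of vertices along an equality of levels. -/
def castV (n : ℕ) {a b : ℕ} (h : a = b) : ChromV n a → ChromV n b :=
  fun v => h ▸ v

section Aux

/-- Colors of a simplex of `χ^ℓ(ρ)` lie in `ρ`. -/
lemma ids_subset_of_mem_chromSub {n : ℕ} {ρ : Finset (Fin n)} :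
    ∀ ℓ (γ : Finset (ChromV n ℓ)), γ ∈ chromSub n ρ ℓ → ids γ ⊆ ρ
  | 0, γ, h => by
      intro i hi
      simp only [ids, Finset.mem_image] at hi
      obtain ⟨v, hv, rfl⟩ := hi
      exact h.2 hv
  | ℓ + 1, γ, h => by
      intro i hi
      simp only [ids, Finset.mem_image] at hi
      obtain ⟨v, hv, rfl⟩ := hi
      have h1 := h.2.1 v hv
      exact ids_subset_of_mem_chromSub ℓ v.2 h1.1 h1.2

lemma ids_subset_carr {n ℓ : ℕ} (γ : Finset (ChromV n ℓ)) : ids γ ⊆ carr γ := by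
  intro i hi
  simp only [carr, Finset.mem_filter, Finset.mem_univ, true_and]
  intro ρ hρ
  exact ids_subset_of_mem_chromSub ℓ γ hρ hi

/-- `subdiv` is monotone in the complex. -/
lemma subdiv_mono {α : Type} {n : ℕ} (col : α → Fin n) {K K' : Set (Finset α)}
    (h : K ⊆ K') : subdiv col K ⊆ subdiv col K' := by
  intro s hs
  refine ⟨hs.1, fun v hv => ⟨h (hs.2.1 v hv).1, (hs.2.1 v hv).2⟩, hs.2.2⟩

/-- `chromSub` is closed under nonempty faces. -/
lemma chromSub_closed {n : ℕ} {ρ : Finset (Fin n)} :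
    ∀ ℓ (γ s : Finset (ChromV n ℓ)), γ ∈ chromSub n ρ ℓ → s.Nonempty → s ⊆ γ →
      s ∈ chromSub n ρ ℓ
  | 0, γ, s, h, hne, hsub => ⟨hne, hsub.trans h.2⟩
  | ℓ + 1, γ, s, h, hne, hsub =>
      ⟨hne, fun v hv => h.2.1 v (hsub hv),
        fun u hu v hv => h.2.2.1 u (hsub hu) v (hsub hv),
        fun u hu v hv => h.2.2.2.1 u (hsub hu) v (hsub hv),
        fun u hu v hv => h.2.2.2.2 u (hsub hu) v (hsub hv)⟩

lemma iterSub_mono (n ℓ : ℕ) :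
    ∀ m {K K' : Set (Finset (ChromV n ℓ))}, K ⊆ K' → iterSub n ℓ m K ⊆ iterSub n ℓ m K'
  | 0, _, _, h => h
  | m + 1, _, _, h => subdiv_mono _ (iterSub_mono n ℓ m h)

lemma iterSub_chromSub (n : ℕ) (ρ : Finset (Fin n)) (ℓ : ℕ) :
    ∀ m, iterSub n ℓ m (chromSub n ρ ℓ) ⊆ chromSub n ρ (ℓ + m)
  | 0 => le_refl _
  | m + 1 => by
      show subdiv (chromCol n (ℓ + m)) (iterSub n ℓ m (chromSub n ρ ℓ)) ⊆
        subdiv (chromCol n (ℓ + m)) (chromSub n ρ (ℓ + m))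
      exact subdiv_mono _ (iterSub_chromSub n ρ ℓ m)

lemma mem_chromSub_of_subOf {n ℓ m : ℕ} {ρ : Finset (Fin n)}
    {τ : Finset (ChromV n ℓ)} {τ' : Finset (ChromV n (ℓ + m))}
    (hτ : τ ∈ chromSub n ρ ℓ) (hτ' : τ' ∈ subOf m τ) : τ' ∈ chromSub n ρ (ℓ + m) := by
  have h1 : facesOf τ ⊆ chromSub n ρ ℓ := fun s hs => chromSub_closed ℓ τ s hτ hs.1 hs.2
  exact iterSub_chromSub n ρ ℓ m (iterSub_mono n ℓ m h1 hτ')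

lemma carr_subset_of_subOf {n ℓ m : ℕ}
    {τ : Finset (ChromV n ℓ)} {τ' : Finset (ChromV n (ℓ + m))}
    (hτ' : τ' ∈ subOf m τ) : carr τ' ⊆ carr τ := by
  intro i hi
  simp only [carr, Finset.mem_filter, Finset.mem_univ, true_and] at hi ⊢
  intro ρ hρ
  exact hi ρ (mem_chromSub_of_subOf hρ hτ')

/-- Colors shrink under iterated subdivision. -/
lemma ids_subset_of_iterSub {n ℓ : ℕ} {τ : Finset (ChromV n ℓ)} :
    ∀ m (γ : Finset (ChromV n (ℓ + m))), γ ∈ iterSub n ℓ m (facesOf τ) → ids γ ⊆ ids τ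
  | 0, γ, h => Finset.image_subset_image h.2
  | m + 1, γ, h => by
      intro i hi
      simp only [ids, Finset.mem_image] at hi
      obtain ⟨v, hv, rfl⟩ := hi
      have h1 := h.2.1 v hv
      exact ids_subset_of_iterSub m v.2 h1.1 h1.2

/-- A simplex of `χ^ℓ(ρ)` with `ℓ ≥ 1` has pairwise distinct colors. -/
lemma card_ids_of_mem_chromSub {n ℓ : ℕ} {ρ : Finset (Fin n)}
    {γ : Finset (ChromV n ℓ)} (hℓ : 1 ≤ ℓ) (h : γ ∈ chromSub n ρ ℓ) :
    (ids γ).card = γ.card := by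
  cases ℓ with
  | zero => omega
  | succ k =>
    apply Finset.card_image_of_injOn
    intro u hu v hv huv
    by_contra hne
    exact h.2.2.1 u hu v hv hne huv

end Aux

/-- Valencies shrink: for τ ∈ χ^ℓ(σ) and τ' ∈ χ^m(τ),
val'(τ') ⊆ val(τ). -/
theorem saVal_shrinks
    (n ℓ m : ℕ) (hn : 3 ≤ n) (hℓ : 1 ≤ ℓ) (hm : 1 ≤ m)
    (τ : Finset (ChromV n ℓ)) (hτ : τ ∈ chromSub n Finset.univ ℓ)
    (τ' : Finset (ChromV n (ℓ + m))) (hτ' : τ' ∈ subOf m τ) :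
    saVal τ' ⊆ saVal τ := by
  have hτ'univ : τ' ∈ chromSub n Finset.univ (ℓ + m) := mem_chromSub_of_subOf hτ hτ'
  have hids : ids τ' ⊆ ids τ := ids_subset_of_iterSub m τ' hτ'
  unfold saVal
  split_ifs with h1 h2 h2
  · exact hids
  · exact hids.trans (ids_subset_carr τ)
  · exfalso
    have hc : (ids τ').card = τ'.card := card_ids_of_mem_chromSub (by omega) hτ'univ
    have h3 : (ids τ).card ≤ τ.card := Finset.card_image_le
    have h4 : (ids τ').card ≤ (ids τ).card := Finset.card_le_card hids
    omega
  · exact carr_subset_of_subOf hτ'
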